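/- Let G be a group, A a unital associative ℂ-algebra, and let G act on A by ℂ-algebra automorphisms (written g·a). Let n ≥ 1 and let f : A^{n+1} → (G → ℂ) be an equivariant n-cochain. Then B₀(b_H f) + b'(B₀ f) = f + (−1)^{n+1} λ_H f, as functions A^{n+1} → (G → ℂ). -/

import Mathlib

/-- An `n`-cochain on a `G`-algebra `A`: a function of `n+1` algebra arguments with
values in functions on the group `G`. -/
def Cochain (G A : Type*) (n : ℕ) : Type _ :=
  (Fin (n + 1) → A) → G → ℂ

section

variable {G A : Type*} [Group G] [Ring A] [Algebra ℂ A] [MulSemiringAction G A]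

/-- `f` is equivariant: `f (g·a⁰, …, g·aⁿ | g h g⁻¹) = f (a⁰, …, aⁿ | h)`. -/
def IsEquivariantCochain {n : ℕ} (f : Cochain G A n) : Prop :=
  ∀ (g h : G) (a : Fin (n + 1) → A),
    f (fun i => g • a i) (g * h * g⁻¹) = f a h

/-- The equivariant cyclic permutation:
`(λ_H f)(a⁰, …, aⁿ | h) = f (h⁻¹·aⁿ, a⁰, …, aⁿ⁻¹ | h)`. -/
def lamH {n : ℕ} (f : Cochain G A n) : Cochain G A n :=
  fun a h => f (Fin.cons (h⁻¹ • a (Fin.last n)) (Fin.init a)) h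

/-- The operator `b'`:
`(b' f)(a⁰, …, aⁿ⁺¹ | h) = ∑_{j=0}^n (-1)^j f (a⁰, …, aʲaʲ⁺¹, …, aⁿ⁺¹ | h)`. -/
noncomputable def bPrime {n : ℕ} (f : Cochain G A n) : Cochain G A (n + 1) :=
  fun a h => ∑ j ∈ Finset.range (n + 1), (-1 : ℂ) ^ j *
    f (fun i : Fin (n + 1) =>
        if (i : ℕ) < j then a i.castSucc
        else if (i : ℕ) = j then a i.castSucc * a i.succ
        else a i.succ) h

/-- The equivariant Hochschild differential:
`(b_H f)(a⁰, …, aⁿ⁺¹ | h) = (b' f)(a⁰, …, aⁿ⁺¹ | h)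
  + (-1)^{n+1} f ((h⁻¹·aⁿ⁺¹)·a⁰, a¹, …, aⁿ | h)`. -/
noncomputable def bH {n : ℕ} (f : Cochain G A n) : Cochain G A (n + 1) :=
  fun a h => bPrime f a h +
    (-1 : ℂ) ^ (n + 1) *
      f (Fin.cons ((h⁻¹ • a (Fin.last (n + 1))) * a 0)
          (fun i : Fin n => a i.succ.castSucc)) h

/-- The operator `B₀` on `(n+1)`-cochains:
`(B₀ f)(a⁰, …, aⁿ | h) = f (1, a⁰, …, aⁿ | h) - (-1)^{n+1} f (a⁰, …, aⁿ, 1 | h)`. -/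
def B0 {n : ℕ} (f : Cochain G A (n + 1)) : Cochain G A n :=
  fun a h => f (Fin.cons 1 a) h - (-1 : ℂ) ^ (n + 1) * f (Fin.snoc a 1) h

/-- The equivariant cyclic antisymmetrization on `n`-cochains:
`A_H = ∑_{j=0}^n (-1)^{nj} λ_H^j`. -/
noncomputable def AH {n : ℕ} (f : Cochain G A n) : Cochain G A n :=
  fun a h => ∑ j ∈ Finset.range (n + 1), (-1 : ℂ) ^ (n * j) * (lamH^[j] f) a h

end

section auxB0

variable {G A : Type*} [Group G] [Ring A] [Algebra ℂ A] [MulSemiringAction G A]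

/-- The `j`-th "merged" tuple appearing in `bPrime`. -/
def auxSa {n : ℕ} (a : Fin (n + 1) → A) (j : ℕ) : Fin n → A := fun i =>
  if (i : ℕ) < j then a i.castSucc
  else if (i : ℕ) = j then a i.castSucc * a i.succ
  else a i.succ

lemma auxConsZero {n : ℕ} (a : Fin (n + 1) → A) :
    (fun i : Fin (n + 1) =>
      if (i : ℕ) < (0 : ℕ) then (Fin.cons (1:A) a : Fin (n + 2) → A) i.castSucc
      else if (i : ℕ) = (0 : ℕ) then
        (Fin.cons (1:A) a : Fin (n + 2) → A) i.castSucc *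
          (Fin.cons (1:A) a : Fin (n + 2) → A) i.succ
      else (Fin.cons (1:A) a : Fin (n + 2) → A) i.succ) = a := by
  funext i
  induction i using Fin.cases with
  | zero => simp
  | succ k => simp

lemma auxConsSucc {n : ℕ} (a : Fin (n + 1) → A) (j : ℕ) :
    (fun i : Fin (n + 1) =>
      if (i : ℕ) < j + 1 then (Fin.cons (1:A) a : Fin (n + 2) → A) i.castSucc
      else if (i : ℕ) = j + 1 then
        (Fin.cons (1:A) a : Fin (n + 2) → A) i.castSucc *
          (Fin.cons (1:A) a : Fin (n + 2) → A) i.succ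
      else (Fin.cons (1:A) a : Fin (n + 2) → A) i.succ) = Fin.cons 1 (auxSa a j) := by
  funext i
  induction i using Fin.cases with
  | zero => simp
  | succ k =>
    simp only [Fin.cons_succ, Fin.val_succ, ← Fin.succ_castSucc, auxSa,
      Nat.add_lt_add_iff_right, Nat.add_right_cancel_iff]

lemma auxSnoc {n : ℕ} (a : Fin (n + 1) → A) (j : ℕ) (hj : j < n) :
    (fun i : Fin (n + 1) =>
      if (i : ℕ) < j then (Fin.snoc a (1:A) : Fin (n + 2) → A) i.castSucc
      else if (i : ℕ) = j then
        (Fin.snoc a (1:A) : Fin (n + 2) → A) i.castSucc *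
          (Fin.snoc a (1:A) : Fin (n + 2) → A) i.succ
      else (Fin.snoc a (1:A) : Fin (n + 2) → A) i.succ) = Fin.snoc (auxSa a j) 1 := by
  funext i
  induction i using Fin.lastCases with
  | last =>
    rw [if_neg (by simp; omega), if_neg (by simp; omega)]
    simp [Fin.succ_last]
  | cast k =>
    simp only [Fin.coe_castSucc, Fin.succ_castSucc, Fin.snoc_castSucc, auxSa]

lemma auxSnocLast {n : ℕ} (a : Fin (n + 1) → A) :
    (fun i : Fin (n + 1) =>
      if (i : ℕ) < n then (Fin.snoc a (1:A) : Fin (n + 2) → A) i.castSucc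
      else if (i : ℕ) = n then
        (Fin.snoc a (1:A) : Fin (n + 2) → A) i.castSucc *
          (Fin.snoc a (1:A) : Fin (n + 2) → A) i.succ
      else (Fin.snoc a (1:A) : Fin (n + 2) → A) i.succ) = a := by
  funext i
  induction i using Fin.lastCases with
  | last =>
    rw [if_neg (by simp), if_pos (by simp)]
    simp [Fin.succ_last]
  | cast k =>
    rw [if_pos (by simpa using k.isLt)]
    simp

lemma auxQcons {n : ℕ} (g : G) (a : Fin (n + 1) → A) :
    (Fin.cons (g • (Fin.cons (1:A) a : Fin (n + 2) → A) (Fin.last (n + 1)) *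
        (Fin.cons (1:A) a : Fin (n + 2) → A) 0)
      (fun i : Fin n => (Fin.cons (1:A) a : Fin (n + 2) → A) i.succ.castSucc) :
        Fin (n + 1) → A)
    = Fin.cons (g • a (Fin.last n)) (Fin.init a) := by
  funext i
  induction i using Fin.cases with
  | zero => simp [← Fin.succ_last]
  | succ k => simp [← Fin.succ_castSucc, Fin.init]

lemma auxQsnoc {n : ℕ} (g : G) (a : Fin (n + 1) → A) :
    (Fin.cons (g • (Fin.snoc a (1:A) : Fin (n + 2) → A) (Fin.last (n + 1)) *
        (Fin.snoc a (1:A) : Fin (n + 2) → A) 0)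
      (fun i : Fin n => (Fin.snoc a (1:A) : Fin (n + 2) → A) i.succ.castSucc) :
        Fin (n + 1) → A) = a := by
  funext i
  induction i using Fin.cases with
  | zero =>
    rw [Fin.cons_zero, Fin.snoc_last, smul_one, one_mul,
      show ((0 : Fin (n + 2))) = Fin.castSucc 0 from (Fin.castSucc_zero).symm,
      Fin.snoc_castSucc]
  | succ k => simp only [Fin.cons_succ, Fin.snoc_castSucc]

end auxB0

/-- For `n = m + 1 ≥ 1` and an equivariant `n`-cochain `f`,
`B₀(b_H f) + b'(B₀ f) = f + (-1)^{n+1} λ_H f`. -/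
theorem B0_bH_add_bPrime_B0 {G A : Type*} [Group G] [Ring A] [Algebra ℂ A]
    [MulSemiringAction G A] [SMulCommClass G ℂ A] {m : ℕ}
    (f : Cochain G A (m + 1)) (hf : IsEquivariantCochain f) :
    ∀ (a : Fin (m + 2) → A) (h : G),
      B0 (bH f) a h + bPrime (B0 f) a h
        = f a h + (-1 : ℂ) ^ (m + 1 + 1) * lamH f a h := by
  intro a h
  have e1 : bH f (Fin.cons 1 a) h
      = f a h
        + (∑ j ∈ Finset.range (m + 1), (-1 : ℂ) ^ (j + 1) * f (Fin.cons 1 (auxSa a j)) h)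
        + (-1 : ℂ) ^ (m + 1 + 1)
            * f (Fin.cons (h⁻¹ • a (Fin.last (m + 1))) (Fin.init a)) h := by
    simp only [bH, bPrime]
    rw [Finset.sum_range_succ']
    simp only [auxConsZero, auxConsSucc, auxQcons, pow_zero, one_mul]
    ring
  have e2 : bH f (Fin.snoc a 1) h
      = ∑ j ∈ Finset.range (m + 1), (-1 : ℂ) ^ j * f (Fin.snoc (auxSa a j) 1) h := by
    simp only [bH, bPrime]
    rw [Finset.sum_range_succ]
    simp only [auxSnocLast, auxQsnoc]
    have hz : ((-1 : ℂ) ^ (m + 1) * f a h + (-1 : ℂ) ^ (m + 1 + 1) * f a h) = 0 := by ring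
    rw [add_assoc, hz, add_zero]
    exact Finset.sum_congr rfl fun j hj => by
      rw [auxSnoc a j (Finset.mem_range.mp hj)]
  have e3 : bPrime (B0 f) a h
      = ∑ j ∈ Finset.range (m + 1),
          (-1 : ℂ) ^ j *
            (f (Fin.cons 1 (auxSa a j)) h - (-1 : ℂ) ^ (m + 1) * f (Fin.snoc (auxSa a j) 1) h) := rfl
  have e0 : B0 (bH f) a h
      = bH f (Fin.cons 1 a) h - (-1 : ℂ) ^ (m + 1 + 1) * bH f (Fin.snoc a 1) h := rfl
  have elam : lamH f a h = f (Fin.cons (h⁻¹ • a (Fin.last (m + 1))) (Fin.init a)) h := rfl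
  rw [e0, e1, e2, e3, elam]
  have key : (∑ j ∈ Finset.range (m + 1), (-1 : ℂ) ^ (j + 1) * f (Fin.cons 1 (auxSa a j)) h)
      - (-1 : ℂ) ^ (m + 1 + 1)
          * (∑ j ∈ Finset.range (m + 1), (-1 : ℂ) ^ j * f (Fin.snoc (auxSa a j) 1) h)
      + (∑ j ∈ Finset.range (m + 1),
          (-1 : ℂ) ^ j *
            (f (Fin.cons 1 (auxSa a j)) h - (-1 : ℂ) ^ (m + 1) * f (Fin.snoc (auxSa a j) 1) h))
      = 0 := by
    rw [Finset.mul_sum, ← Finset.sum_sub_distrib, ← Finset.sum_add_distrib]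
    apply Finset.sum_eq_zero
    intro j _
    ring
  linear_combination key
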